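/- Let M be a finitely generated right R-module. Then the natural map Φ_M : M ⊗_R R((z)) → M((z)) is surjective. -/

import Mathlib

noncomputable section
open scoped TensorProduct

namespace Novikov
variable (Γ : Type*) [AddCommGroup Γ] [LinearOrder Γ] [IsOrderedAddMonoid Γ] (R : Type*) [CommRing R]

/-- `R((z))` acting on itself commutes with the `R`-action. -/
instance : SMulCommClass R (HahnSeries Γ R) (HahnSeries Γ R) where
  smul_comm r x y := by
    rw [← HahnSeries.C_mul_eq_smul, ← HahnSeries.C_mul_eq_smul, smul_eq_mul, smul_eq_mul,
      mul_left_comm]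

variable (M : Type*) [AddCommGroup M] [Module R M]

/-- The formal series `Σ_i (r_i • m) z^i`, for `f = Σ_i r_i z^i`. -/
def phiSeries (f : HahnSeries Γ R) (m : M) : HahnSeries Γ M :=
  ⟨fun i => f.coeff i • m, f.isPWO_support.mono (fun i hi h => by
    simp only [Function.mem_support] at hi
    exact hi (by rw [h, zero_smul]))⟩

@[simp] lemma phiSeries_coeff (f : HahnSeries Γ R) (m : M) (i : Γ) :
    (phiSeries Γ R M f m).coeff i = f.coeff i • m := rfl

/-- The natural map `M ⊗_R R((z)) → M((z))`, `m ⊗ Σ r_i z^i ↦ Σ (m r_i) z^i`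
(written with the scalar factor on the left, as is usual for base change). -/
def Phi : HahnSeries Γ R ⊗[R] M →ₗ[R] HahnSeries Γ M :=
  TensorProduct.lift
    { toFun := fun f =>
        { toFun := phiSeries Γ R M f
          map_add' := fun m m' => by
            ext i; simp only [phiSeries_coeff, HahnSeries.coeff_add, smul_add]
          map_smul' := fun r m => by
            ext i; simp only [phiSeries_coeff, RingHom.id_apply, HahnSeries.coeff_smul,
              smul_comm r] }
      map_add' := fun f g => by
        ext m i
        simp only [LinearMap.coe_mk, AddHom.coe_mk, LinearMap.add_apply, phiSeries_coeff,
          HahnSeries.coeff_add, add_smul]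
      map_smul' := fun r f => by
        ext m i
        simp only [LinearMap.coe_mk, AddHom.coe_mk, RingHom.id_apply, LinearMap.smul_apply,
          phiSeries_coeff, HahnSeries.coeff_smul, smul_assoc] }

@[simp] lemma Phi_tmul (f : HahnSeries Γ R) (m : M) :
    Phi Γ R M (f ⊗ₜ[R] m) = phiSeries Γ R M f m := rfl

end Novikov

lemma aux_coeff_sum {Γ N : Type*} [AddCommGroup Γ] [LinearOrder Γ] [IsOrderedAddMonoid Γ] [AddCommGroup N]
    {α : Type*} (s : Finset α) (f : α → HahnSeries Γ N) (i : Γ) :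
    (∑ a ∈ s, f a).coeff i = ∑ a ∈ s, (f a).coeff i := by
  classical
  induction s using Finset.induction with
  | empty => simp
  | insert _ _ h ih => simp [Finset.sum_insert h, HahnSeries.coeff_add, ih]

open Novikov in
/-- For a finitely generated right `R`-module `M`, the natural map
`Φ_M : M ⊗_R R((z)) → M((z))` is surjective. -/
theorem finite_tensor_laurentSeries_surjective
    (R : Type*) [CommRing R] (M : Type*) [AddCommGroup M] [Module R M]
    [Module.Finite R M] :
    Function.Surjective (Phi ℤ R M) := by
  classical
  obtain ⟨s, hs⟩ := Module.Finite.fg_top (R := R) (M := M)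
  intro g
  have hmem : ∀ i : ℤ, ∃ c : M → R, ∑ a ∈ s, c a • a = g.coeff i := by
    intro i
    have : g.coeff i ∈ Submodule.span R (s : Set M) := hs ▸ Submodule.mem_top
    obtain ⟨f, -, hf⟩ := Submodule.mem_span_finset.mp this
    exact ⟨f, hf⟩
  choose c hc using hmem
  set F : M → HahnSeries ℤ R := fun a =>
    ⟨fun i => if g.coeff i = 0 then 0 else c i a,
      g.isPWO_support.mono (fun i hi => by
        simp only [Function.mem_support] at hi ⊢
        intro h; apply hi; simp [h])⟩ with hF
  refine ⟨∑ a ∈ s, F a ⊗ₜ[R] a, ?_⟩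
  ext i
  rw [map_sum, aux_coeff_sum]
  have : ∀ a, (Phi ℤ R M (F a ⊗ₜ[R] a)).coeff i = (F a).coeff i • a := fun a => rfl
  simp only [this]
  by_cases h : g.coeff i = 0
  · have h0 : ∑ a ∈ s, (F a).coeff i • a = 0 :=
      Finset.sum_eq_zero fun a _ => by
        show (if g.coeff i = 0 then 0 else c i a) • a = 0
        rw [if_pos h, zero_smul]
    rw [h0, h]
  · have h1 : ∑ a ∈ s, (F a).coeff i • a = ∑ a ∈ s, c i a • a :=
      Finset.sum_congr rfl fun a _ => by
        show (if g.coeff i = 0 then 0 else c i a) • a = c i a • a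
        rw [if_neg h]
    rw [h1, hc]
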